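/- For any invariant ideal I on a group G, the S-completion S_I is an S-complete ideal; that is, every subset of G that is S_I-small is already I-small. -/

import Mathlib

open scoped Pointwise Topology

/-- A subset `A` of a group `G` is *large* if `F * A = G` for some finite `F ⊆ G`. -/
def IsLarge {G : Type*} [Group G] (A : Set G) : Prop :=
  ∃ F : Finset G, (F : Set G) * A = Set.univ

/-- A subset `A` of a group `G` is *small* if `B \ A` is large for every large `B ⊆ G`. -/
def IsSmallSet {G : Type*} [Group G] (A : Set G) : Prop :=
  ∀ B : Set G, IsLarge B → IsLarge (B \ A)

/-- A translation-invariant ideal on a group `G`: a proper family of subsets of `G`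
containing the empty set, closed under subsets, finite unions and left translations. -/
structure IsInvariantIdeal (G : Type*) [Group G] (I : Set (Set G)) : Prop where
  proper : I ≠ Set.univ
  empty_mem : ∅ ∈ I
  subset_mem : ∀ ⦃A B : Set G⦄, A ∈ I → B ⊆ A → B ∈ I
  union_mem : ∀ ⦃A B : Set G⦄, A ∈ I → B ∈ I → A ∪ B ∈ I
  translate_mem : ∀ (x : G) ⦃A : Set G⦄, A ∈ I → (fun a => x * a) '' A ∈ I

/-- A subset `A ⊆ G` is `I`-large if `G \ FA ∈ I` for some finite `F ⊆ G`. -/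
def IsILarge {G : Type*} [Group G] (I : Set (Set G)) (A : Set G) : Prop :=
  ∃ F : Finset G, (Set.univ : Set G) \ ((F : Set G) * A) ∈ I

/-- A subset `A ⊆ G` is `I`-small if `L \ A` is `I`-large for every `I`-large `L ⊆ G`. -/
def IsISmall {G : Type*} [Group G] (I : Set (Set G)) (A : Set G) : Prop :=
  ∀ L : Set G, IsILarge I L → IsILarge I (L \ A)

section Aux

variable {G : Type*} [Group G] {I : Set (Set G)}

lemma aux_univ_not_mem (hI : IsInvariantIdeal G I) : Set.univ ∉ I := fun h =>
  hI.proper (Set.eq_univ_of_forall fun A => hI.subset_mem h (Set.subset_univ A))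

lemma aux_ilarge_mono (hI : IsInvariantIdeal G I) {A B : Set G} (hAB : A ⊆ B)
    (hA : IsILarge I A) : IsILarge I B := by
  obtain ⟨F, hF⟩ := hA
  exact ⟨F, hI.subset_mem hF (Set.diff_subset_diff_right (Set.mul_subset_mul_left hAB))⟩

lemma aux_ilarge_univ (hI : IsInvariantIdeal G I) : IsILarge I (Set.univ : Set G) := by
  refine ⟨{1}, ?_⟩
  have : (({1} : Finset G) : Set G) * (Set.univ : Set G) = Set.univ := by
    simp [Set.mul_univ]
  rw [this, Set.diff_self]
  exact hI.empty_mem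

lemma aux_finset_mul_mem (hI : IsInvariantIdeal G I) {N : Set G} (hN : N ∈ I) (F : Finset G) :
    (F : Set G) * N ∈ I := by
  classical
  induction F using Finset.induction_on with
  | empty => simpa [Set.empty_mul] using hI.empty_mem
  | @insert a F ha ih =>
    have : ((insert a F : Finset G) : Set G) * N = ({a} : Set G) * N ∪ (F : Set G) * N := by
      rw [Finset.coe_insert, Set.insert_eq, Set.union_mul]
    rw [this]
    refine hI.union_mem ?_ ih
    have : ({a} : Set G) * N = (fun b => a * b) '' N := by
      rw [Set.singleton_mul]
    rw [this]
    exact hI.translate_mem a hN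

lemma aux_mem_ismall (hI : IsInvariantIdeal G I) {N : Set G} (hN : N ∈ I) : IsISmall I N := by
  intro L hL
  obtain ⟨F, hF⟩ := hL
  refine ⟨F, hI.subset_mem (hI.union_mem hF (aux_finset_mul_mem hI hN F)) ?_⟩
  rintro g ⟨-, hg⟩
  by_cases h : g ∈ (F : Set G) * L
  · obtain ⟨f, hf, l, hl, rfl⟩ := h
    by_cases hlN : l ∈ N
    · exact Or.inr ⟨f, hf, l, hlN, rfl⟩
    · exact absurd ⟨f, hf, l, ⟨hl, hlN⟩, rfl⟩ hg
  · exact Or.inl ⟨trivial, h⟩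

lemma aux_ilarge_translate (hI : IsInvariantIdeal G I) {A : Set G} (x : G)
    (hA : IsILarge I A) : IsILarge I ((fun a => x * a) '' A) := by
  obtain ⟨F, hF⟩ := hA
  classical
  refine ⟨F.image (· * x⁻¹), ?_⟩
  have : ((F.image (· * x⁻¹) : Finset G) : Set G) * ((fun a => x * a) '' A)
      = (F : Set G) * A := by
    ext g
    simp only [Finset.coe_image, Set.mem_mul, Set.mem_image]
    constructor
    · rintro ⟨f', ⟨f, hf, rfl⟩, a', ⟨a, ha, rfl⟩, rfl⟩
      exact ⟨f, hf, a, ha, by group⟩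
    · rintro ⟨f, hf, a, ha, rfl⟩
      exact ⟨f * x⁻¹, ⟨f, hf, rfl⟩, x * a, ⟨a, ha, rfl⟩, by group⟩
  rwa [this]

lemma aux_ilarge_S_iff (hI : IsInvariantIdeal G I) {A : Set G} :
    IsILarge {B : Set G | IsISmall I B} A ↔ IsILarge I A := by
  classical
  constructor
  · rintro ⟨F, hF⟩
    have h1 : IsISmall I ((Set.univ : Set G) \ ((F : Set G) * A)) := hF
    have h2 := h1 Set.univ (aux_ilarge_univ hI)
    rw [Set.diff_diff_cancel_left (Set.subset_univ _)] at h2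
    obtain ⟨F', hF'⟩ := h2
    refine ⟨F' * F, ?_⟩
    rwa [Finset.coe_mul, mul_assoc]
  · rintro ⟨F, hF⟩
    exact ⟨F, aux_mem_ismall hI hF⟩

end Aux

/-- The `S`-completion `S_I = {A : A is I-small}` of an invariant ideal `I` is an
`S`-complete invariant ideal: every `S_I`-small subset of `G` is already `I`-small. -/
theorem sCompletion_is_sComplete {G : Type*} [Group G] (I : Set (Set G))
    (hI : IsInvariantIdeal G I) :
    IsInvariantIdeal G {A : Set G | IsISmall I A} ∧
    {A : Set G | IsISmall {B : Set G | IsISmall I B} A} = {A : Set G | IsISmall I A} := by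
  constructor
  · refine ⟨?_, ?_, ?_, ?_, ?_⟩
    · -- proper
      intro h
      have huniv : IsISmall I (Set.univ : Set G) := by
        have : (Set.univ : Set G) ∈ {A : Set G | IsISmall I A} := by rw [h]; trivial
        exact this
      obtain ⟨F, hF⟩ := huniv Set.univ (aux_ilarge_univ hI)
      rw [Set.diff_self, Set.mul_empty, Set.diff_empty] at hF
      exact aux_univ_not_mem hI hF
    · -- empty
      intro L hL
      simpa using hL
    · -- subset
      intro A B hA hBA L hL
      exact aux_ilarge_mono hI (Set.diff_subset_diff_right hBA) (hA L hL)
    · -- union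
      intro A B hA hB L hL
      have := hB (L \ A) (hA L hL)
      rwa [Set.diff_diff] at this
    · -- translate
      intro x A hA L hL
      have h1 := aux_ilarge_translate hI x (hA _ (aux_ilarge_translate hI x⁻¹ hL))
      have heq : (fun a => x * a) '' ((fun a => x⁻¹ * a) '' L \ A)
          = L \ (fun a => x * a) '' A := by
        rw [Set.image_diff (mul_right_injective x)]
        congr 1
        ext g
        simp [mul_inv_cancel_left]
      rwa [heq] at h1
  · ext A
    simp only [Set.mem_setOf_eq]
    constructor
    · intro hA L hL
      exact (aux_ilarge_S_iff hI).mp (hA L ((aux_ilarge_S_iff hI).mpr hL))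
    · intro hA L hL
      exact (aux_ilarge_S_iff hI).mpr (hA L ((aux_ilarge_S_iff hI).mp hL))
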